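/- Let m ≥ 1 be an integer and a_0, …, a_m positive real numbers, and let E := { z ∈ ℂ^{m+1} : Σ_{j=0}^{m} a_j |z_j|² = 1 } be the ellipsoid. Then there exists a constant C > 0 such that for every δ > 0, the (2m+1)-dimensional Hausdorff measure of the set { z ∈ E : min_{0≤j≤m} |z_j| ≤ δ } is at most C·δ². -/

import Mathlib

open MeasureTheory
open scoped NNReal ENNReal

/-- `ℂ^{m+1}`, identified with Euclidean space `ℝ^{2m+2}`, carries the Borel
σ-algebra. -/
noncomputable instance (m : ℕ) : MeasurableSpace (EuclideanSpace ℂ (Fin (m + 1))) :=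
  borel _

instance (m : ℕ) : BorelSpace (EuclideanSpace ℂ (Fin (m + 1))) := ⟨rfl⟩

namespace ESCV
noncomputable section

/-- real component selector -/
def cmp (b : Bool) (w : ℂ) : ℝ := if b then w.im else w.re

/-- sign from a boolean -/
def sg (ε : Bool) : ℝ := if ε then 1 else -1

lemma sg_abs (ε : Bool) : |sg ε| = 1 := by cases ε <;> simp [sg]

lemma sg_sq (ε : Bool) : sg ε * sg ε = 1 := by cases ε <;> norm_num [sg]

/-- index type for chart domain: all real coordinates except one -/
abbrev Idx (m : ℕ) (q : Fin (m+1) × Bool) := {p : Fin (m+1) × Bool // p ≠ q}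

lemma card_idx (m : ℕ) (q : Fin (m+1) × Bool) : Fintype.card (Idx m q) = 2*m+1 := by
  simp [Idx, Fintype.card_subtype_compl]
  omega

variable {m : ℕ}

def Qf (a : Fin (m+1) → ℝ) (q : Fin (m+1) × Bool) (x : Idx m q → ℝ) : ℝ :=
  ∑ p, a p.1.1 * x p ^ 2

def c2 (m : ℕ) : ℝ := 1 / (2*(m+1))

lemma c2_pos (m : ℕ) : 0 < c2 m := by unfold c2; positivity

lemma c2_lt_one (m : ℕ) : c2 m ≤ 1 := by
  unfold c2
  rw [div_le_one (by positivity)]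
  have : (0:ℝ) ≤ m := Nat.cast_nonneg m
  nlinarith

def gf (a : Fin (m+1) → ℝ) (k : Fin (m+1)) (b : Bool) (x : Idx m (k,b) → ℝ) : ℝ :=
  Real.sqrt ((1 - Qf a (k,b) x) / a k)

def cval (a : Fin (m+1) → ℝ) (k : Fin (m+1)) (b : Bool) (ε : Bool) (x : Idx m (k,b) → ℝ)
    (p : Fin (m+1) × Bool) : ℝ :=
  if h : p = (k,b) then sg ε * gf a k b x else x ⟨p, h⟩

def chart (a : Fin (m+1) → ℝ) (k : Fin (m+1)) (b : Bool) (ε : Bool) (x : Idx m (k,b) → ℝ) :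
    EuclideanSpace ℂ (Fin (m+1)) :=
  WithLp.toLp 2 (fun l => ⟨cval a k b ε x (l,false), cval a k b ε x (l,true)⟩)

def DD (a : Fin (m+1) → ℝ) (k : Fin (m+1)) (b : Bool) : Set (Idx m (k,b) → ℝ) :=
  {x | Qf a (k,b) x ≤ 1 - c2 m}

/-- bound for coordinates on the domain -/
noncomputable def Rr (a : Fin (m+1) → ℝ) : ℝ :=
  Real.sqrt (1 / (Finset.univ.inf' Finset.univ_nonempty a))

def piece (a : Fin (m+1) → ℝ) (k : Fin (m+1)) (b : Bool) (ε : Bool) :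
    Set (EuclideanSpace ℂ (Fin (m+1))) :=
  {z | (∑ l, a l * ‖z l‖ ^ 2 = 1) ∧ c2 m / a k ≤ cmp b (z k) ^ 2 ∧
    sg ε * cmp b (z k) = |cmp b (z k)|}

lemma ainf_pos {a : Fin (m+1) → ℝ} (ha : ∀ j, 0 < a j) :
    0 < Finset.univ.inf' Finset.univ_nonempty a := by
  rw [Finset.lt_inf'_iff]
  exact fun i _ => ha i

lemma Rr_pos {a : Fin (m+1) → ℝ} (ha : ∀ j, 0 < a j) : 0 < Rr a := by
  have := ainf_pos ha
  exact Real.sqrt_pos.2 (by positivity)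

lemma sqrt_lip {t u v : ℝ} (ht : 0 < t) (hu : t ≤ u) (hv : t ≤ v) :
    |Real.sqrt u - Real.sqrt v| ≤ |u - v| / (2 * Real.sqrt t) := by
  have hst : 0 < Real.sqrt t := Real.sqrt_pos.2 ht
  have hsum : 2 * Real.sqrt t ≤ Real.sqrt u + Real.sqrt v := by
    have h1 : Real.sqrt t ≤ Real.sqrt u := Real.sqrt_le_sqrt hu
    have h2 : Real.sqrt t ≤ Real.sqrt v := Real.sqrt_le_sqrt hv
    linarith
  have key : |Real.sqrt u - Real.sqrt v| * (2 * Real.sqrt t) ≤ |u - v| := by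
    have h1 : (Real.sqrt u - Real.sqrt v) * (Real.sqrt u + Real.sqrt v) = u - v := by
      have := Real.sq_sqrt (le_trans ht.le hu)
      have := Real.sq_sqrt (le_trans ht.le hv)
      ring_nf
      nlinarith [Real.sq_sqrt (le_trans ht.le hu), Real.sq_sqrt (le_trans ht.le hv)]
    calc |Real.sqrt u - Real.sqrt v| * (2 * Real.sqrt t)
        ≤ |Real.sqrt u - Real.sqrt v| * (Real.sqrt u + Real.sqrt v) := by
          apply mul_le_mul_of_nonneg_left hsum (abs_nonneg _)
      _ = |u - v| := by
          rw [← abs_of_nonneg (by positivity : (0:ℝ) ≤ Real.sqrt u + Real.sqrt v), ← abs_mul, h1]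
  rw [le_div_iff₀ (by positivity)]
  exact key

lemma sum_split (q : Fin (m+1) × Bool) (F : Fin (m+1) × Bool → ℝ) :
    (∑ p : Idx m q, F p.1) + F q = ∑ p, F p := by
  classical
  have h : ∑ p ∈ Finset.univ.erase q, F p = ∑ p : Idx m q, F p.1 :=
    Finset.sum_subtype _ (by simp) F
  rw [← h]
  exact Finset.sum_erase_add _ _ (Finset.mem_univ q)

lemma full_sum (a : Fin (m+1) → ℝ) (z : EuclideanSpace ℂ (Fin (m+1))) :
    ∑ p : Fin (m+1) × Bool, a p.1 * cmp p.2 (z p.1) ^ 2 = ∑ l, a l * ‖z l‖ ^ 2 := by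
  rw [Fintype.sum_prod_type]
  apply Finset.sum_congr rfl
  intro l _
  rw [Fintype.sum_bool]
  simp only [cmp, if_true, Bool.false_eq_true, if_false]
  rw [Complex.sq_norm, Complex.normSq_apply]
  ring

lemma Qf_restrict (a : Fin (m+1) → ℝ) (q : Fin (m+1) × Bool) (z : EuclideanSpace ℂ (Fin (m+1))) :
    Qf a q (fun p => cmp p.1.2 (z p.1.1)) =
      (∑ l, a l * ‖z l‖ ^ 2) - a q.1 * cmp q.2 (z q.1) ^ 2 := by
  have := sum_split q (fun p => a p.1 * cmp p.2 (z p.1) ^ 2)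
  rw [full_sum] at this
  rw [Qf]
  linarith


/-- the canonical preimage point of `z` under a chart -/
def rep (z : EuclideanSpace ℂ (Fin (m+1))) (q : Fin (m+1) × Bool) : Idx m q → ℝ :=
  fun p => cmp p.1.2 (z p.1.1)

lemma piece_rep {a : Fin (m+1) → ℝ} (ha : ∀ j, 0 < a j) (k : Fin (m+1)) (b ε : Bool)
    {z : EuclideanSpace ℂ (Fin (m+1))} (hz : z ∈ piece a k b ε) :
    rep z (k,b) ∈ DD a k b ∧ chart a k b ε (rep z (k,b)) = z := by
  obtain ⟨hsum, hc, hsg⟩ := hz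
  have hQ : Qf a (k,b) (rep z (k,b)) = 1 - a k * cmp b (z k) ^ 2 := by
    have : rep z (k,b) = fun p : Idx m (k,b) => cmp p.1.2 (z p.1.1) := rfl
    rw [this, Qf_restrict a (k,b) z, hsum]
  have hak := ha k
  have hc' : c2 m ≤ a k * cmp b (z k) ^ 2 := by
    rw [div_le_iff₀ hak] at hc
    linarith [hc]
  have hDD : rep z (k,b) ∈ DD a k b := by
    rw [DD, Set.mem_setOf_eq, hQ]
    linarith
  refine ⟨hDD, ?_⟩
  have hgf : gf a k b (rep z (k,b)) = |cmp b (z k)| := by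
    rw [gf, hQ]
    have : (1 - (1 - a k * cmp b (z k) ^ 2)) / a k = cmp b (z k) ^ 2 := by
      field_simp
      ring
    rw [this, Real.sqrt_sq_eq_abs]
  have hcval : ∀ p : Fin (m+1) × Bool, cval a k b ε (rep z (k,b)) p = cmp p.2 (z p.1) := by
    intro p
    rw [cval]
    split_ifs with h
    · subst h
      rw [hgf, ← hsg, ← mul_assoc, sg_sq, one_mul]
    · rfl
  apply PiLp.ext
  intro l
  have h1 := hcval (l, false)
  have h2 := hcval (l, true)
  simp only [cmp, if_true, Bool.false_eq_true, if_false] at h1 h2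
  apply Complex.ext
  · exact h1
  · exact h2

lemma mem_DD_bound {a : Fin (m+1) → ℝ} (ha : ∀ j, 0 < a j) {k : Fin (m+1)} {b : Bool}
    {x : Idx m (k,b) → ℝ} (hx : x ∈ DD a k b) (p : Idx m (k,b)) : |x p| ≤ Rr a := by
  have hterm : a p.1.1 * x p ^ 2 ≤ Qf a (k,b) x := by
    rw [Qf]
    apply Finset.single_le_sum (f := fun p : Idx m (k,b) => a p.1.1 * x p ^ 2)
      (fun i _ => mul_nonneg (ha i.1.1).le (sq_nonneg _)) (Finset.mem_univ p)
  have hQ1 : Qf a (k,b) x ≤ 1 := le_trans hx (by linarith [c2_pos m])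
  have hainf := ainf_pos ha
  have hle : Finset.univ.inf' Finset.univ_nonempty a ≤ a p.1.1 :=
    Finset.inf'_le a (Finset.mem_univ _)
  have hsq : x p ^ 2 ≤ 1 / Finset.univ.inf' Finset.univ_nonempty a := by
    have hp := ha p.1.1
    rw [le_div_iff₀ hainf]
    nlinarith [sq_nonneg (x p)]
  calc |x p| = Real.sqrt ((x p) ^ 2) := (Real.sqrt_sq_eq_abs _).symm
    _ ≤ Rr a := Real.sqrt_le_sqrt hsq


set_option maxHeartbeats 2000000 in
lemma chart_lip {a : Fin (m+1) → ℝ} (ha : ∀ j, 0 < a j) (k : Fin (m+1)) (b ε : Bool) :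
    ∃ K : ℝ≥0, LipschitzOnWith K (chart a k b ε) (DD a k b) := by
  classical
  set R := Rr a with hR
  have hR0 : 0 < R := Rr_pos ha
  set t0 := c2 m / a k with ht0def
  have ht0 : 0 < t0 := div_pos (c2_pos m) (ha k)
  set SA := ∑ p : Idx m (k,b), a p.1.1 with hSA
  have hSA0 : 0 ≤ SA := Finset.sum_nonneg fun p _ => (ha p.1.1).le
  set L1 := SA * (2*R) with hL1
  have hL10 : 0 ≤ L1 := by positivity
  set Lg := L1 / a k / (2 * Real.sqrt t0) with hLg
  have hLg0 : 0 ≤ Lg := by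
    have := (ha k).le
    have := (Real.sqrt_pos.2 ht0).le
    positivity
  set c := max 1 Lg with hc
  have hc1 : (1:ℝ) ≤ c := le_max_left _ _
  have hc0 : 0 ≤ c := le_trans zero_le_one hc1
  set Kr := Real.sqrt (2*(m+1)) * c with hKr
  have hKr0 : 0 ≤ Kr := by positivity
  refine ⟨Kr.toNNReal, LipschitzOnWith.of_dist_le_mul ?_⟩
  intro x hx y hy
  rw [Real.coe_toNNReal _ hKr0]
  set d := dist x y with hd
  have hd0 : 0 ≤ d := dist_nonneg
  have hcoord : ∀ p, |x p - y p| ≤ d := by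
    intro p
    rw [← Real.dist_eq]
    exact dist_le_pi_dist x y p
  have hxR : ∀ p, |x p| ≤ R := fun p => mem_DD_bound ha hx p
  have hyR : ∀ p, |y p| ≤ R := fun p => mem_DD_bound ha hy p
  have hQ : |Qf a (k,b) x - Qf a (k,b) y| ≤ L1 * d := by
    rw [Qf, Qf, ← Finset.sum_sub_distrib]
    calc |∑ p : Idx m (k,b), (a p.1.1 * x p ^ 2 - a p.1.1 * y p ^ 2)|
        ≤ ∑ p : Idx m (k,b), |a p.1.1 * x p ^ 2 - a p.1.1 * y p ^ 2| :=
          Finset.abs_sum_le_sum_abs _ _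
      _ ≤ ∑ p : Idx m (k,b), a p.1.1 * (2*R*d) := by
          apply Finset.sum_le_sum
          intro p _
          have h1 : a p.1.1 * x p ^ 2 - a p.1.1 * y p ^ 2
              = a p.1.1 * ((x p - y p) * (x p + y p)) := by ring
          rw [h1, abs_mul, abs_of_pos (ha p.1.1), abs_mul]
          have h2 : |x p + y p| ≤ 2 * R := by
            calc |x p + y p| ≤ |x p| + |y p| := abs_add_le _ _
              _ ≤ 2 * R := by linarith [hxR p, hyR p]
          have := hcoord p
          have h3 : |x p - y p| * |x p + y p| ≤ d * (2*R) :=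
            mul_le_mul this h2 (abs_nonneg _) hd0
          calc a p.1.1 * (|x p - y p| * |x p + y p|) ≤ a p.1.1 * (d * (2*R)) :=
                mul_le_mul_of_nonneg_left h3 (ha p.1.1).le
            _ = a p.1.1 * (2*R*d) := by ring
      _ = L1 * d := by rw [← Finset.sum_mul, hL1]; ring
  have hgf : |gf a k b x - gf a k b y| ≤ Lg * d := by
    rw [gf, gf]
    set ux := (1 - Qf a (k,b) x) / a k with hux
    set uy := (1 - Qf a (k,b) y) / a k with huy
    have hxD : Qf a (k,b) x ≤ 1 - c2 m := hx
    have hyD : Qf a (k,b) y ≤ 1 - c2 m := hy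
    have haux : t0 ≤ ux := by
      rw [ht0def, hux]
      exact div_le_div_of_nonneg_right (by linarith) (ha k).le
    have hauy : t0 ≤ uy := by
      rw [ht0def, huy]
      exact div_le_div_of_nonneg_right (by linarith) (ha k).le
    have huxy : |ux - uy| ≤ L1 * d / a k := by
      have h1 : ux - uy = (Qf a (k,b) y - Qf a (k,b) x) / a k := by
        rw [hux, huy]; ring
      rw [h1, abs_div, abs_of_pos (ha k), abs_sub_comm]
      exact div_le_div_of_nonneg_right hQ (ha k).le
    calc |Real.sqrt ux - Real.sqrt uy| ≤ |ux - uy| / (2 * Real.sqrt t0) :=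
          sqrt_lip ht0 haux hauy
      _ ≤ (L1 * d / a k) / (2 * Real.sqrt t0) := by
          have hs := Real.sqrt_pos.2 ht0
          exact div_le_div_of_nonneg_right huxy (by positivity)
      _ = Lg * d := by rw [hLg]; ring
  have hcval : ∀ p : Fin (m+1) × Bool,
      |cval a k b ε x p - cval a k b ε y p| ≤ c * d := by
    intro p
    rw [cval, cval]
    split_ifs with h
    · rw [← mul_sub, abs_mul, sg_abs, one_mul]
      calc |gf a k b x - gf a k b y| ≤ Lg * d := hgf
        _ ≤ c * d := mul_le_mul_of_nonneg_right (le_max_right _ _) hd0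
    · calc |x ⟨p, h⟩ - y ⟨p, h⟩| ≤ d := hcoord _
        _ ≤ c * d := by nlinarith
  have hcoorddist : ∀ l : Fin (m+1),
      dist (chart a k b ε x l) (chart a k b ε y l) ^ 2 ≤ 2 * (c * d) ^ 2 := by
    intro l
    have h1 : dist (chart a k b ε x l) (chart a k b ε y l)
        = Real.sqrt ((cval a k b ε x (l,false) - cval a k b ε y (l,false)) ^ 2
          + (cval a k b ε x (l,true) - cval a k b ε y (l,true)) ^ 2) := by
      rw [Complex.dist_eq_re_im]
      rfl
    rw [h1, Real.sq_sqrt (by positivity)]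
    have e1 := hcval (l, false)
    have e2 := hcval (l, true)
    have f1 : (cval a k b ε x (l,false) - cval a k b ε y (l,false)) ^ 2 ≤ (c*d)^2 := by
      rw [← sq_abs]
      exact pow_le_pow_left₀ (abs_nonneg _) e1 2
    have f2 : (cval a k b ε x (l,true) - cval a k b ε y (l,true)) ^ 2 ≤ (c*d)^2 := by
      rw [← sq_abs]
      exact pow_le_pow_left₀ (abs_nonneg _) e2 2
    linarith
  calc dist (chart a k b ε x) (chart a k b ε y)
      = Real.sqrt (∑ l, dist (chart a k b ε x l) (chart a k b ε y l) ^ 2) :=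
        EuclideanSpace.dist_eq _ _
    _ ≤ Real.sqrt (∑ _l : Fin (m+1), 2 * (c * d) ^ 2) := by
        apply Real.sqrt_le_sqrt
        exact Finset.sum_le_sum fun l _ => hcoorddist l
    _ = Real.sqrt ((2*(m+1)) * (c * d) ^ 2) := by
        rw [Finset.sum_const, Finset.card_univ, Fintype.card_fin, nsmul_eq_mul]
        push_cast
        ring_nf
    _ = Real.sqrt (2*(m+1)) * (c * d) := by
        rw [Real.sqrt_mul (by positivity), Real.sqrt_sq (by positivity)]
    _ = Kr * d := by rw [hKr]; ring


lemma image_bound {a : Fin (m+1) → ℝ} (ha : ∀ j, 0 < a j) (k : Fin (m+1)) (b ε : Bool) :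
    ∃ Kc : ℝ≥0∞, Kc ≠ ⊤ ∧ ∀ t : Idx m (k,b) → ℝ,
      μH[(2*m+1 : ℝ)] (chart a k b ε '' (DD a k b ∩ Set.Icc (fun p => -(t p)) t)) ≤
        Kc * ∏ p, ENNReal.ofReal (2 * t p) := by
  obtain ⟨K, hK⟩ := chart_lip ha k b ε
  refine ⟨(K : ℝ≥0∞) ^ (2*(m:ℝ)+1), ENNReal.rpow_ne_top_of_nonneg (by positivity)
    ENNReal.coe_ne_top, ?_⟩
  intro t
  have hd : (0:ℝ) ≤ 2*m+1 := by positivity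
  have h1 := (hK.mono (Set.inter_subset_left :
    DD a k b ∩ Set.Icc (fun p => -(t p)) t ⊆ DD a k b)).hausdorffMeasure_image_le hd
  have hHv : (μH[(2*m+1 : ℝ)] : Measure (Idx m (k,b) → ℝ)) = volume := by
    have hcast : ((Fintype.card (Idx m (k,b)) : ℝ)) = (2*m+1 : ℝ) := by
      rw [card_idx]; push_cast; ring
    rw [← hcast]
    exact hausdorffMeasure_pi_real
  have h2 : μH[(2*m+1 : ℝ)] (DD a k b ∩ Set.Icc (fun p => -(t p)) t) ≤
      ∏ p, ENNReal.ofReal (2 * t p) := by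
    calc μH[(2*m+1 : ℝ)] (DD a k b ∩ Set.Icc (fun p => -(t p)) t)
        ≤ μH[(2*m+1 : ℝ)] (Set.Icc (fun p => -(t p)) t) := measure_mono Set.inter_subset_right
      _ = volume (Set.Icc (fun p => -(t p)) t) := by rw [hHv]
      _ = ∏ p, ENNReal.ofReal (t p - (-(t p))) := Real.volume_Icc_pi
      _ = ∏ p, ENNReal.ofReal (2 * t p) := by
          apply Finset.prod_congr rfl
          intro p _
          congr 1
          ring
  calc μH[(2*m+1 : ℝ)] (chart a k b ε '' (DD a k b ∩ Set.Icc (fun p => -(t p)) t))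
      ≤ (K : ℝ≥0∞) ^ (2*(m:ℝ)+1) * μH[(2*m+1 : ℝ)] (DD a k b ∩ Set.Icc (fun p => -(t p)) t) := by
        convert h1 using 3 <;> push_cast <;> ring
    _ ≤ (K : ℝ≥0∞) ^ (2*(m:ℝ)+1) * ∏ p, ENNReal.ofReal (2 * t p) := mul_le_mul_right h2 _

lemma card_filter_j {k : Fin (m+1)} {b : Bool} {j : Fin (m+1)} (hjk : j ≠ k) :
    (Finset.univ.filter (fun p : Idx m (k,b) => p.1.1 = j)).card = 2 := by
  classical
  rw [Finset.card_eq_two]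
  have hf : ((j, false) : Fin (m+1) × Bool) ≠ (k, b) := by
    simp [Prod.ext_iff]
    intro h; exact absurd h hjk
  have ht : ((j, true) : Fin (m+1) × Bool) ≠ (k, b) := by
    simp [Prod.ext_iff]
    intro h; exact absurd h hjk
  refine ⟨⟨(j, false), hf⟩, ⟨(j, true), ht⟩, ?_, ?_⟩
  · simp [Subtype.ext_iff, Prod.ext_iff]
  · ext p
    rcases p with ⟨⟨l, bb⟩, hp⟩
    simp only [Finset.mem_filter, Finset.mem_univ, true_and, Finset.mem_insert,
      Finset.mem_singleton, Subtype.ext_iff, Prod.ext_iff]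
    cases bb <;> simp <;> tauto

lemma prod_t_bound {a : Fin (m+1) → ℝ} (ha : ∀ j, 0 < a j) {k : Fin (m+1)} {b : Bool}
    {j : Fin (m+1)} (hjk : j ≠ k) {δ : ℝ} (hδ : 0 ≤ δ) :
    (∏ p : Idx m (k,b), ENNReal.ofReal (2 * (if p.1.1 = j then min δ (Rr a) else Rr a)))
      ≤ ENNReal.ofReal (2*δ) ^ 2 * ENNReal.ofReal (max 1 (2 * Rr a)) ^ (2*m+1) := by
  classical
  set B := ENNReal.ofReal (max 1 (2 * Rr a)) with hB
  have hB1 : 1 ≤ B := by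
    rw [hB]
    exact ENNReal.one_le_ofReal.2 (le_max_left _ _)
  rw [← Finset.prod_filter_mul_prod_filter_not Finset.univ (fun p : Idx m (k,b) => p.1.1 = j)]
  have hfirst : (∏ p ∈ Finset.univ.filter (fun p : Idx m (k,b) => p.1.1 = j),
      ENNReal.ofReal (2 * (if p.1.1 = j then min δ (Rr a) else Rr a)))
      ≤ ENNReal.ofReal (2*δ) ^ 2 := by
    have : ∀ p ∈ Finset.univ.filter (fun p : Idx m (k,b) => p.1.1 = j),
        ENNReal.ofReal (2 * (if p.1.1 = j then min δ (Rr a) else Rr a))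
          = ENNReal.ofReal (2 * min δ (Rr a)) := by
      intro p hp
      rw [Finset.mem_filter] at hp
      rw [if_pos hp.2]
    rw [Finset.prod_congr rfl this, Finset.prod_const, card_filter_j hjk]
    apply pow_le_pow_left' (ENNReal.ofReal_le_ofReal ?_)
    have := min_le_left δ (Rr a)
    linarith
  have hsecond : (∏ p ∈ Finset.univ.filter (fun p : Idx m (k,b) => ¬ p.1.1 = j),
      ENNReal.ofReal (2 * (if p.1.1 = j then min δ (Rr a) else Rr a))) ≤ B ^ (2*m+1) := by
    calc (∏ p ∈ Finset.univ.filter (fun p : Idx m (k,b) => ¬ p.1.1 = j),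
        ENNReal.ofReal (2 * (if p.1.1 = j then min δ (Rr a) else Rr a)))
        ≤ ∏ _p ∈ Finset.univ.filter (fun p : Idx m (k,b) => ¬ p.1.1 = j), B := by
          apply Finset.prod_le_prod'
          intro p hp
          rw [Finset.mem_filter] at hp
          rw [if_neg hp.2, hB]
          exact ENNReal.ofReal_le_ofReal (le_max_right _ _)
      _ = B ^ (Finset.univ.filter (fun p : Idx m (k,b) => ¬ p.1.1 = j)).card :=
          Finset.prod_const B
      _ ≤ B ^ (2*m+1) := by
          apply pow_le_pow_right' hB1
          calc (Finset.univ.filter (fun p : Idx m (k,b) => ¬ p.1.1 = j)).card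
              ≤ Finset.univ.card := Finset.card_filter_le _ _
            _ = 2*m+1 := by rw [Finset.card_univ, card_idx]
  exact mul_le_mul' hfirst hsecond

lemma prod_R_bound {a : Fin (m+1) → ℝ} (ha : ∀ j, 0 < a j) {k : Fin (m+1)} {b : Bool} :
    (∏ _p : Idx m (k,b), ENNReal.ofReal (2 * Rr a))
      ≤ ENNReal.ofReal (max 1 (2 * Rr a)) ^ (2*m+1) := by
  rw [Finset.prod_const, Finset.card_univ, card_idx]
  exact pow_le_pow_left' (ENNReal.ofReal_le_ofReal (le_max_right _ _)) _



lemma abs_cmp_le (b : Bool) (w : ℂ) : |cmp b w| ≤ ‖w‖ := by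
  cases b
  · simpa [cmp] using Complex.abs_re_le_norm w
  · simpa [cmp] using Complex.abs_im_le_norm w

lemma piece_inter_subset {a : Fin (m+1) → ℝ} (ha : ∀ j, 0 < a j) (k : Fin (m+1)) (b ε : Bool)
    {j : Fin (m+1)} (hjk : j ≠ k) (δ : ℝ) :
    piece a k b ε ∩ {z | ‖z j‖ ≤ δ} ⊆
      chart a k b ε '' (DD a k b ∩
        Set.Icc (fun p : Idx m (k,b) => -(if p.1.1 = j then min δ (Rr a) else Rr a))
          (fun p => if p.1.1 = j then min δ (Rr a) else Rr a)) := by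
  rintro z ⟨hz, hzj⟩
  obtain ⟨hDD, hchart⟩ := piece_rep ha k b ε hz
  refine ⟨rep z (k,b), ⟨hDD, ?_⟩, hchart⟩
  rw [Set.mem_Icc]
  have hbound : ∀ p : Idx m (k,b),
      |rep z (k,b) p| ≤ (if p.1.1 = j then min δ (Rr a) else Rr a) := by
    intro p
    have h1 : |rep z (k,b) p| ≤ ‖z p.1.1‖ := abs_cmp_le _ _
    have h2 := mem_DD_bound ha hDD p
    split_ifs with h
    · refine le_min (h1.trans ?_) h2
      rw [h]
      exact hzj
    · exact h2
  constructor
  · rw [Pi.le_def]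
    intro p
    simpa using (abs_le.1 (hbound p)).1
  · rw [Pi.le_def]
    intro p
    exact (abs_le.1 (hbound p)).2

lemma piece_subset {a : Fin (m+1) → ℝ} (ha : ∀ j, 0 < a j) (k : Fin (m+1)) (b ε : Bool) :
    piece a k b ε ⊆ chart a k b ε ''
      (DD a k b ∩ Set.Icc (fun _ : Idx m (k,b) => -(Rr a)) (fun _ => Rr a)) := by
  rintro z hz
  obtain ⟨hDD, hchart⟩ := piece_rep ha k b ε hz
  refine ⟨rep z (k,b), ⟨hDD, ?_⟩, hchart⟩
  rw [Set.mem_Icc]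
  constructor
  · rw [Pi.le_def]
    intro p
    simpa using (abs_le.1 (mem_DD_bound ha hDD p)).1
  · rw [Pi.le_def]
    intro p
    exact (abs_le.1 (mem_DD_bound ha hDD p)).2

lemma exists_sg (r : ℝ) : ∃ ε, sg ε * r = |r| := by
  rcases le_or_gt 0 r with h | h
  · exact ⟨true, by simp [sg, abs_of_nonneg h]⟩
  · exact ⟨false, by simp [sg, abs_of_neg h]⟩

lemma piece_cover {a : Fin (m+1) → ℝ} (ha : ∀ j, 0 < a j) :
    {z : EuclideanSpace ℂ (Fin (m+1)) | ∑ l, a l * ‖z l‖ ^ 2 = 1} ⊆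
      ⋃ (k : Fin (m+1)), ⋃ (b : Bool), ⋃ (ε : Bool), piece a k b ε := by
  intro z hz
  have hz' : (∑ l, a l * ‖z l‖ ^ 2) = 1 := hz
  have hex : ∃ k ∈ Finset.univ, 1/((m:ℝ)+1) ≤ a k * ‖z k‖ ^ 2 := by
    apply Finset.exists_le_of_sum_le Finset.univ_nonempty
    rw [hz', Finset.sum_const, Finset.card_univ, Fintype.card_fin, nsmul_eq_mul]
    rw [mul_one_div]
    push_cast
    rw [div_self (by positivity)]
  obtain ⟨k, -, hk⟩ := hex
  have habs : ‖z k‖ ^ 2 = (z k).re ^ 2 + (z k).im ^ 2 := by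
    rw [Complex.sq_norm, Complex.normSq_apply]; ring
  obtain ⟨b, hb⟩ : ∃ b, ((z k).re ^ 2 + (z k).im ^ 2) / 2 ≤ cmp b (z k) ^ 2 := by
    rcases le_total ((z k).re ^ 2) ((z k).im ^ 2) with h | h
    · exact ⟨true, by simp only [cmp, if_true]; linarith⟩
    · exact ⟨false, by simp only [cmp, Bool.false_eq_true, if_false]; linarith⟩
  obtain ⟨ε, hε⟩ := exists_sg (cmp b (z k))
  have hcb : c2 m / a k ≤ cmp b (z k) ^ 2 := by
    rw [div_le_iff₀ (ha k)]
    have h2 : 2 * c2 m = 1/((m:ℝ)+1) := by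
      unfold c2
      field_simp
    rw [habs] at hk
    nlinarith [ha k, hb, hk]
  exact Set.mem_iUnion.2 ⟨k, Set.mem_iUnion.2 ⟨b, Set.mem_iUnion.2 ⟨ε, ⟨hz', hcb, hε⟩⟩⟩⟩


end
end ESCV

/-- for the ellipsoid `E = {z ∈ ℂ^{m+1} : ∑ a_j |z_j|² = 1}` there
is `C > 0` such that for every `δ > 0` the `(2m+1)`-dimensional Hausdorff measure
of `{z ∈ E : min_j |z_j| ≤ δ}` is at most `C δ²`. -/
theorem ellipsoid_small_coordinate_volume (m : ℕ) (hm : 1 ≤ m)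
    (a : Fin (m + 1) → ℝ) (ha : ∀ j, 0 < a j) :
    ∃ C : ℝ, 0 < C ∧ ∀ δ : ℝ, 0 < δ →
      μH[(2 * m + 1 : ℝ)]
        {z : EuclideanSpace ℂ (Fin (m + 1)) |
          (∑ j, a j * ‖z j‖ ^ 2 = 1) ∧
          (Finset.univ.inf' Finset.univ_nonempty fun j => ‖z j‖) ≤ δ} ≤
        ENNReal.ofReal (C * δ ^ 2) := by
  classical
  choose Kc hKcT hKc using fun (k : Fin (m+1)) (b ε : Bool) => ESCV.image_bound ha k b ε
  set B : ℝ≥0∞ := ENNReal.ofReal (max 1 (2 * ESCV.Rr a)) with hB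
  set BB : ℝ≥0∞ := B ^ (2*m+1) with hBB
  have hBBne : BB ≠ ⊤ := by
    rw [hBB, hB]
    exact ENNReal.pow_ne_top ENNReal.ofReal_ne_top
  set T : ℝ≥0∞ := ∑ k : Fin (m+1), ∑ b : Bool, ∑ ε : Bool, Kc k b ε with hT
  have hTne : T ≠ ⊤ := by
    rw [hT, ← lt_top_iff_ne_top]
    rw [ENNReal.sum_lt_top]
    intro k _
    rw [ENNReal.sum_lt_top]
    intro b _
    rw [ENNReal.sum_lt_top]
    intro ε _
    exact lt_top_iff_ne_top.2 (hKcT k b ε)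
  set G : ℝ≥0∞ := ((m+1 : ℕ) : ℝ≥0∞) * T * BB with hG
  have hGne : G ≠ ⊤ := by
    rw [hG]
    exact ENNReal.mul_ne_top (ENNReal.mul_ne_top (ENNReal.natCast_ne_top _) hTne) hBBne
  -- per-piece bounds
  have hpiece_j : ∀ (k : Fin (m+1)) (b ε : Bool) (j : Fin (m+1)), j ≠ k → ∀ δ : ℝ, 0 ≤ δ →
      μH[(2*m+1 : ℝ)] (ESCV.piece a k b ε ∩ {z | ‖z j‖ ≤ δ}) ≤
        Kc k b ε * (ENNReal.ofReal (2*δ) ^ 2 * BB) := by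
    intro k b ε j hjk δ hδ
    calc μH[(2*m+1 : ℝ)] (ESCV.piece a k b ε ∩ {z | ‖z j‖ ≤ δ})
        ≤ μH[(2*m+1 : ℝ)] (ESCV.chart a k b ε '' (ESCV.DD a k b ∩
            Set.Icc (fun p : ESCV.Idx m (k,b) =>
              -(if p.1.1 = j then min δ (ESCV.Rr a) else ESCV.Rr a))
              (fun p => if p.1.1 = j then min δ (ESCV.Rr a) else ESCV.Rr a))) :=
          measure_mono (ESCV.piece_inter_subset ha k b ε hjk δ)
      _ ≤ Kc k b ε * ∏ p : ESCV.Idx m (k,b),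
            ENNReal.ofReal (2 * (if p.1.1 = j then min δ (ESCV.Rr a) else ESCV.Rr a)) :=
          hKc k b ε _
      _ ≤ Kc k b ε * (ENNReal.ofReal (2*δ) ^ 2 * BB) :=
          mul_le_mul_right (ESCV.prod_t_bound ha hjk hδ) _
  have hpiece : ∀ (k : Fin (m+1)) (b ε : Bool),
      μH[(2*m+1 : ℝ)] (ESCV.piece a k b ε) ≤ Kc k b ε * BB := by
    intro k b ε
    calc μH[(2*m+1 : ℝ)] (ESCV.piece a k b ε)
        ≤ μH[(2*m+1 : ℝ)] (ESCV.chart a k b ε '' (ESCV.DD a k b ∩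
            Set.Icc (fun _ : ESCV.Idx m (k,b) => -(ESCV.Rr a)) (fun _ => ESCV.Rr a))) :=
          measure_mono (ESCV.piece_subset ha k b ε)
      _ ≤ Kc k b ε * ∏ _p : ESCV.Idx m (k,b), ENNReal.ofReal (2 * ESCV.Rr a) := hKc k b ε _
      _ ≤ Kc k b ε * BB := mul_le_mul_right (ESCV.prod_R_bound ha) _
  -- threshold
  set amax := Finset.univ.sup' Finset.univ_nonempty a with hamax
  have hamax0 : 0 < amax := lt_of_lt_of_le (ha 0) (Finset.le_sup' a (Finset.mem_univ 0))
  set δ0 := Real.sqrt (ESCV.c2 m / amax) with hδ0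
  have hδ00 : 0 < δ0 := Real.sqrt_pos.2 (div_pos (ESCV.c2_pos m) hamax0)
  have hδ0sq : δ0 ^ 2 = ESCV.c2 m / amax :=
    Real.sq_sqrt (div_pos (ESCV.c2_pos m) hamax0).le
  refine ⟨(G.toReal + 1) * (4 + 1/δ0^2), by positivity, ?_⟩
  intro δ hδ
  set S := {z : EuclideanSpace ℂ (Fin (m + 1)) |
    (∑ j, a j * ‖z j‖ ^ 2 = 1) ∧
    (Finset.univ.inf' Finset.univ_nonempty fun j => ‖z j‖) ≤ δ} with hS
  have hC0 : (0:ℝ) ≤ G.toReal := ENNReal.toReal_nonneg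
  rcases lt_or_ge δ δ0 with hcase | hcase
  · -- small δ
    have hcover : S ⊆ ⋃ (j : Fin (m+1)), ⋃ (k : Fin (m+1)), ⋃ (b : Bool), ⋃ (ε : Bool),
        (ESCV.piece a k b ε ∩ {z | j ≠ k ∧ ‖z j‖ ≤ δ}) := by
      intro z hz
      obtain ⟨hsum, hinf⟩ := hz
      obtain ⟨j, -, hj⟩ := (Finset.inf'_le_iff _).1 hinf
      have hcov := ESCV.piece_cover ha hsum
      simp only [Set.mem_iUnion] at hcov
      obtain ⟨k, b, ε, hkz⟩ := hcov
      have hjk : j ≠ k := by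
        intro h
        subst h
        have h1 : ESCV.c2 m / a j ≤ ESCV.cmp b (z j) ^ 2 := hkz.2.1
        have h2 : ESCV.cmp b (z j) ^ 2 ≤ ‖z j‖ ^ 2 := by
          rw [← sq_abs (ESCV.cmp b (z j))]
          exact pow_le_pow_left₀ (abs_nonneg _) (ESCV.abs_cmp_le b (z j)) 2
        have h3 : ‖z j‖ ^ 2 ≤ δ ^ 2 :=
          pow_le_pow_left₀ (norm_nonneg _) hj 2
        have h4 : δ ^ 2 < δ0 ^ 2 := by
          apply pow_lt_pow_left₀ hcase hδ.le
          norm_num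
        have h5 : ESCV.c2 m / amax ≤ ESCV.c2 m / a j :=
          div_le_div_of_nonneg_left (ESCV.c2_pos m).le (ha j)
            (Finset.le_sup' a (Finset.mem_univ j))
        rw [hδ0sq] at h4
        linarith
      simp only [Set.mem_iUnion]
      exact ⟨j, k, b, ε, hkz, hjk, hj⟩
    have hterm : ∀ (j k : Fin (m+1)) (b ε : Bool),
        μH[(2*m+1 : ℝ)] (ESCV.piece a k b ε ∩ {z | j ≠ k ∧ ‖z j‖ ≤ δ}) ≤
          Kc k b ε * (ENNReal.ofReal (2*δ) ^ 2 * BB) := by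
      intro j k b ε
      by_cases hjk : j = k
      · have : ESCV.piece a k b ε ∩ {z | j ≠ k ∧ ‖z j‖ ≤ δ} = ∅ := by
          ext z
          simp [hjk]
        rw [this]
        simp
      · exact le_trans (measure_mono (by intro z hz; exact ⟨hz.1, hz.2.2⟩))
          (hpiece_j k b ε j hjk δ hδ.le)
    calc μH[(2*m+1 : ℝ)] S
        ≤ μH[(2*m+1 : ℝ)] (⋃ (j : Fin (m+1)), ⋃ (k : Fin (m+1)), ⋃ (b : Bool), ⋃ (ε : Bool),
            (ESCV.piece a k b ε ∩ {z | j ≠ k ∧ ‖z j‖ ≤ δ})) :=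
          measure_mono hcover
      _ ≤ ∑ j : Fin (m+1), ∑ k : Fin (m+1), ∑ b : Bool, ∑ ε : Bool,
            μH[(2*m+1 : ℝ)] (ESCV.piece a k b ε ∩ {z | j ≠ k ∧ ‖z j‖ ≤ δ}) := by
          refine le_trans (measure_iUnion_fintype_le _ _) (Finset.sum_le_sum fun j _ => ?_)
          refine le_trans (measure_iUnion_fintype_le _ _) (Finset.sum_le_sum fun k _ => ?_)
          refine le_trans (measure_iUnion_fintype_le _ _) (Finset.sum_le_sum fun b _ => ?_)
          exact measure_iUnion_fintype_le _ _
      _ ≤ ∑ j : Fin (m+1), ∑ k : Fin (m+1), ∑ b : Bool, ∑ ε : Bool,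
            Kc k b ε * (ENNReal.ofReal (2*δ) ^ 2 * BB) := by
          refine Finset.sum_le_sum fun j _ => Finset.sum_le_sum fun k _ =>
            Finset.sum_le_sum fun b _ => Finset.sum_le_sum fun ε _ => hterm j k b ε
      _ = ((m+1 : ℕ) : ℝ≥0∞) * (T * (ENNReal.ofReal (2*δ) ^ 2 * BB)) := by
          rw [hT]
          simp only [Finset.sum_mul]
          rw [Finset.sum_const, Finset.card_univ, Fintype.card_fin, nsmul_eq_mul]
      _ = G * ENNReal.ofReal (2*δ) ^ 2 := by rw [hG]; ring
      _ ≤ ENNReal.ofReal ((G.toReal + 1) * (4 + 1/δ0^2) * δ^2) := by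
          have h1 : ENNReal.ofReal (2*δ) ^ 2 = ENNReal.ofReal (4*δ^2) := by
            rw [← ENNReal.ofReal_pow (by positivity)]
            congr 1
            ring
          rw [h1, ← ENNReal.ofReal_toReal hGne, ← ENNReal.ofReal_mul hC0,
            ENNReal.toReal_ofReal hC0]
          apply ENNReal.ofReal_le_ofReal
          have h2 : (0:ℝ) ≤ 1/δ0^2 := by positivity
          nlinarith [sq_nonneg δ, mul_nonneg (mul_nonneg (by linarith : (0:ℝ) ≤ G.toReal+1) h2)
            (sq_nonneg δ), mul_nonneg hC0 (sq_nonneg δ)]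
  · -- large δ
    calc μH[(2*m+1 : ℝ)] S
        ≤ μH[(2*m+1 : ℝ)] (⋃ (k : Fin (m+1)), ⋃ (b : Bool), ⋃ (ε : Bool),
            ESCV.piece a k b ε) := by
          apply measure_mono
          exact fun z hz => ESCV.piece_cover ha hz.1
      _ ≤ ∑ k : Fin (m+1), ∑ b : Bool, ∑ ε : Bool, μH[(2*m+1 : ℝ)] (ESCV.piece a k b ε) := by
          refine le_trans (measure_iUnion_fintype_le _ _) (Finset.sum_le_sum fun k _ => ?_)
          refine le_trans (measure_iUnion_fintype_le _ _) (Finset.sum_le_sum fun b _ => ?_)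
          exact measure_iUnion_fintype_le _ _
      _ ≤ ∑ k : Fin (m+1), ∑ b : Bool, ∑ ε : Bool, Kc k b ε * BB :=
          Finset.sum_le_sum fun k _ => Finset.sum_le_sum fun b _ =>
            Finset.sum_le_sum fun ε _ => hpiece k b ε
      _ = T * BB := by rw [hT]; simp only [Finset.sum_mul]
      _ ≤ G := by
          rw [hG]
          rw [mul_assoc]
          apply le_mul_of_one_le_left zero_le
          simp
      _ ≤ ENNReal.ofReal ((G.toReal + 1) * (4 + 1/δ0^2) * δ^2) := by
          rw [← ENNReal.ofReal_toReal hGne, ENNReal.toReal_ofReal hC0]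
          apply ENNReal.ofReal_le_ofReal
          have h2 : (0:ℝ) < δ0^2 := by positivity
          have h1 : δ0^2 ≤ δ^2 := by nlinarith
          have h3 : (1:ℝ) ≤ (1/δ0^2) * δ^2 := by
            rw [div_mul_eq_mul_div, le_div_iff₀ h2]
            linarith
          nlinarith [sq_nonneg δ, mul_le_mul_of_nonneg_left h3
            (by linarith : (0:ℝ) ≤ G.toReal+1),
            mul_nonneg (by linarith : (0:ℝ) ≤ G.toReal+1) (sq_nonneg δ)]
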